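/- Every finitely injective K-bilinear space is infinite dimensional and non-degenerate. -/
import Mathlib


universe u

/-- A bilinear space `(V, BV)` is finitely injective if every bilinear monomorphism from a
finite dimensional bilinear space `A` into `V` extends along any bilinear monomorphism
from `A` into a finite dimensional bilinear space `B`. -/
def FinitelyInjective (K : Type u) [Field K] (V : Type u) [AddCommGroup V] [Module K V]
    (BV : V →ₗ[K] V →ₗ[K] K) : Prop :=
  ∀ (A B : Type u) [AddCommGroup A] [Module K A] [AddCommGroup B] [Module K B],
    ∀ (BA : A →ₗ[K] A →ₗ[K] K) (BB : B →ₗ[K] B →ₗ[K] K),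
    FiniteDimensional K A → FiniteDimensional K B →
    ∀ ι : A →ₗ[K] B, Function.Injective ι → (∀ x y : A, BB (ι x) (ι y) = BA x y) →
    ∀ f : A →ₗ[K] V, Function.Injective f → (∀ x y : A, BV (f x) (f y) = BA x y) →
    ∃ g : B →ₗ[K] V, Function.Injective g ∧ (∀ x y : B, BV (g x) (g y) = BB x y) ∧
      g ∘ₗ ι = f

/-- The hyperbolic plane form on `K × K`. -/
def hypForm (K : Type u) [Field K] : (K × K) →ₗ[K] (K × K) →ₗ[K] K :=
  LinearMap.mk₂ K (fun u v => u.1 * v.2 + u.2 * v.1)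
    (by intros; simp; ring) (by intros; simp; ring)
    (by intros; simp; ring) (by intros; simp; ring)

/-- Every finitely injective bilinear space is infinite dimensional and non-degenerate. -/
theorem finitelyInjective_infiniteDimensional_nondegenerate
    {K : Type u} [Field K] {V : Type u} [AddCommGroup V] [Module K V]
    (BV : V →ₗ[K] V →ₗ[K] K) (hV : FinitelyInjective K V BV) :
    ¬ FiniteDimensional K V ∧
      (∀ x : V, (∀ y : V, BV x y = 0) → x = 0) ∧
      (∀ y : V, (∀ x : V, BV x y = 0) → y = 0) := by
  refine ⟨?_, ?_, ?_⟩
  · -- infinite dimensional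
    intro hfd
    -- For each n, embed K^n into V
    have key : ∀ n : ℕ, ∃ g : (Fin n → K) →ₗ[K] V, Function.Injective g := by
      intro n
      obtain ⟨g, hg, -, -⟩ := hV PUnit (Fin n → K) 0 0 inferInstance inferInstance
        0 (fun a b _ => Subsingleton.elim a b) (by simp)
        0 (fun a b _ => Subsingleton.elim a b) (by simp)
      exact ⟨g, hg⟩
    obtain ⟨g, hg⟩ := key (Module.finrank K V + 1)
    have := LinearMap.finrank_le_finrank_of_injective hg
    simp [Module.finrank_fin_fun] at this
  · -- left nondegenerate
    intro x hx
    by_contra hx0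
    have hfx : ∀ a b : K, BV (a • x) (b • x) = 0 := by
      intro a b
      simp [hx x]
    obtain ⟨g, -, hBg, hcomp⟩ := hV K (K × K) 0 (hypForm K) inferInstance inferInstance
      (LinearMap.inl K K K) (LinearMap.inl_injective)
      (by intro a b; simp [hypForm])
      (LinearMap.toSpanSingleton K V x)
      (by
        intro a b hab
        simp only [LinearMap.toSpanSingleton_apply] at hab
        by_contra hne
        have := smul_left_injective K (M := V) hx0 hab
        exact hne this)
      (by intro a b; simpa [LinearMap.toSpanSingleton_apply] using hfx a b)
    have hg1 : g (1, 0) = x := by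
      have := congrArg (fun h => h 1) (congrArg DFunLike.coe hcomp)
      simpa using this
    have h1 : BV x (g (0, 1)) = 1 := by
      rw [← hg1, hBg]
      simp [hypForm]
    rw [hx (g (0,1))] at h1
    exact zero_ne_one h1
  · -- right nondegenerate
    intro y hy
    by_contra hy0
    have hfy : ∀ a b : K, BV (a • y) (b • y) = 0 := by
      intro a b
      simp [hy y]
    obtain ⟨g, -, hBg, hcomp⟩ := hV K (K × K) 0 (hypForm K) inferInstance inferInstance
      (LinearMap.inl K K K) (LinearMap.inl_injective)
      (by intro a b; simp [hypForm])
      (LinearMap.toSpanSingleton K V y)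
      (by
        intro a b hab
        simp only [LinearMap.toSpanSingleton_apply] at hab
        by_contra hne
        exact hne (smul_left_injective K (M := V) hy0 hab))
      (by intro a b; simpa [LinearMap.toSpanSingleton_apply] using hfy a b)
    have hg1 : g (1, 0) = y := by
      have := congrArg (fun h => h 1) (congrArg DFunLike.coe hcomp)
      simpa using this
    have h1 : BV (g (0, 1)) y = 1 := by
      rw [← hg1, hBg]
      simp [hypForm]
    rw [hy (g (0,1))] at h1
    exact zero_ne_one h1
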